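/- Let X be a zero-nonzero pattern and let X' be obtained by appending a column whose zero set is the intersection of the zero sets of some subset of the columns of X. Then the matroid minimum ranks of X and X' are equal: mr(X') = mr(X). -/

import Mathlib

open Set

variable {α β : Type*}

/-- The rank of a matroid: the (common) cardinality of its bases. -/
noncomputable def Matroid.mrk (M : Matroid α) : ℕ := sSup (Set.ncard '' {B | M.IsBase B})

/-- A hyperplane of a matroid: a maximal proper flat
(equivalently, a flat of rank `r(M) - 1`). -/
def Matroid.IsHyperplane (M : Matroid α) (H : Set α) : Prop :=
  M.IsFlat H ∧ H ≠ M.E ∧ ∀ F, M.IsFlat F → H ⊆ F → F = H ∨ F = M.E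

/-- A circuit of a matroid: a minimal dependent set. -/
def Matroid.IsCircuit' (M : Matroid α) (Ct : Set α) : Prop :=
  Ct ⊆ M.E ∧ ¬ M.Indep Ct ∧ ∀ D, D ⊂ Ct → M.Indep D

/-- A point of a matroid: a rank-one flat, i.e. the closure of a nonloop. -/
def Matroid.IsPoint (M : Matroid α) (P : Set α) : Prop :=
  M.IsFlat P ∧ ∃ e, e ∉ M.closure ∅ ∧ P = M.closure {e}

variable {R C : Type*}

/-- Zero set of a set of columns: rows that are zero in every column of `A`. -/
def ZCol (X : R → C → Bool) (A : Set C) : Set R := {r | ∀ a ∈ A, X r a = false}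

/-- Zero set of a set of rows: columns that are zero in every row of `B`. -/
def ZRow (X : R → C → Bool) (B : Set R) : Set C := {c | ∀ b ∈ B, X b c = false}

/-- The intersection lattice of a pattern. -/
def LX (X : R → C → Bool) : Set (Set C) := {F | ∃ S : Set R, F = ZRow X S}

/-- The class of matroids associated with a pattern `X`: matroids on the column
set in which the zero set of every row of `X` is a flat. -/
def RX (X : R → C → Bool) : Set (Matroid C) :=
  {M | M.E = Set.univ ∧ ∀ r : R, M.IsFlat (ZRow X {r})}

/-- The matroid minimum rank of a pattern. -/
noncomputable def mr (X : R → C → Bool) : ℕ := sInf (Matroid.mrk '' RX X)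



section AuxMatroid
variable {γ : Type*} {M : Matroid γ} {I J F B : Set γ}

lemma indep_augment_ncard (hI : M.Indep I) (hJ : M.Indep J) (h : I.ncard < J.ncard)
    (hIf : I.Finite) (hJf : J.Finite) : ∃ e ∈ J \ I, M.Indep (insert e I) :=
  hI.augment hJ (by rw [← hIf.cast_ncard_eq, ← hJf.cast_ncard_eq]; exact_mod_cast h)

lemma closure_eq_of_subset_closure (hI : M.Indep I) (hJ : M.Indep J) (hJI : J ⊆ M.closure I)
    (hc : I.ncard ≤ J.ncard) (hIfin : I.Finite) : M.closure J = M.closure I := by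
  obtain ⟨J₁, hJ₁, hJJ₁⟩ := hJ.subset_isBasis_of_subset hJI (M.closure_subset_ground I)
  have hIb : M.IsBasis I (M.closure I) := hI.isBasis_closure
  have he : J₁.encard = I.encard := hJ₁.encard_eq_encard hIb
  have hJ₁fin : J₁.Finite := by
    rw [← Set.encard_lt_top_iff] at hIfin ⊢
    rwa [he]
  have hcard : J₁.ncard = I.ncard := by
    rw [← hJ₁fin.cast_ncard_eq, ← hIfin.cast_ncard_eq] at he
    exact_mod_cast he
  have hJeq : J = J₁ := Set.eq_of_subset_of_ncard_le hJJ₁ (by omega) hJ₁fin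
  rw [hJeq, hJ₁.closure_eq_closure, Matroid.closure_closure]
end AuxMatroid

section Ext
variable {C : Type*}

def ExtIndep (M : Matroid C) (A : Set C) (I : Set (Option C)) : Prop :=
  M.Indep (some ⁻¹' I) ∧ (none ∈ I → ¬ A ⊆ M.closure (some ⁻¹' I))

lemma preimage_some_insert_some (I : Set (Option C)) (c : C) :
    (some ⁻¹' (insert (some c) I) : Set C) = insert c (some ⁻¹' I) := by ext x; simp

lemma preimage_some_insert_none (I : Set (Option C)) :
    (some ⁻¹' (insert none I) : Set C) = some ⁻¹' I := by ext x; simp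

lemma image_some_preimage {I : Set (Option C)} (h : none ∉ I) :
    some '' (some ⁻¹' I) = I := by
  ext x
  cases x with
  | none => simp [h]
  | some c => simp

lemma ncard_eq_of_none_not_mem [Fintype C] {I : Set (Option C)} (h : none ∉ I) :
    I.ncard = (some ⁻¹' I).ncard := by
  conv_lhs => rw [← image_some_preimage h]
  rw [Set.ncard_image_of_injective _ (Option.some_injective C)]

lemma ncard_eq_of_none_mem [Fintype C] {I : Set (Option C)} (h : none ∈ I) :
    I.ncard = (some ⁻¹' I).ncard + 1 := by
  have h2 : I = insert none (some '' (some ⁻¹' I)) := by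
    ext x
    cases x with
    | none => simp [h]
    | some c => simp
  conv_lhs => rw [h2]
  rw [Set.ncard_insert_of_notMem (by simp) (Set.toFinite _),
    Set.ncard_image_of_injective _ (Option.some_injective C)]

lemma extIndep_aug [Fintype C] {M : Matroid C} {A : Set C} (hE : M.E = Set.univ)
    {I J : Set (Option C)} (hI : ExtIndep M A I) (hJ : ExtIndep M A J)
    (hcard : I.ncard < J.ncard) : ∃ e ∈ J, e ∉ I ∧ ExtIndep M A (insert e I) := by
  set I₀ := (some ⁻¹' I : Set C) with hI₀def
  set J₀ := (some ⁻¹' J : Set C) with hJ₀def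
  have hsome_step : ∀ c, c ∈ J₀ → c ∉ I₀ → M.Indep (insert c I₀) →
      (none ∈ I → ¬ A ⊆ M.closure (insert c I₀)) →
      ∃ e ∈ J, e ∉ I ∧ ExtIndep M A (insert e I) := by
    intro c hcJ hcI hind hcl
    refine ⟨some c, hcJ, fun h => hcI h, ?_⟩
    constructor
    · rw [preimage_some_insert_some]; exact hind
    · intro hn
      rw [preimage_some_insert_some]
      exact hcl (by simpa using hn)
  by_cases hnI : none ∈ I
  · -- Case B
    have hAI : ¬ A ⊆ M.closure I₀ := hI.2 hnI
    obtain ⟨a, haA, ha⟩ := not_subset.1 hAI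
    have haI₀ : a ∉ I₀ := fun h => ha (M.subset_closure I₀ (by rw [hE]; exact subset_univ _) h)
    have hI₁ : M.Indep (insert a I₀) := by
      rw [hI.1.insert_indep_iff_of_notMem haI₀]
      exact ⟨by rw [hE]; trivial, ha⟩
    have hcI : I.ncard = I₀.ncard + 1 := by
      have := ncard_eq_of_none_mem hnI
      rwa [← hI₀def] at this
    have hJcard : I₀.ncard < J₀.ncard := by
      by_cases hnJ : none ∈ J
      · have := ncard_eq_of_none_mem hnJ
        rw [← hJ₀def] at this; omega
      · have := ncard_eq_of_none_not_mem hnJ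
        rw [← hJ₀def] at this; omega
    by_cases hJsub : J₀ ⊆ M.closure (insert a I₀)
    · -- J₀ spans the same as insert a I₀
      obtain ⟨J₁, hJ₁, hJJ₁⟩ := hJ.1.subset_isBasis_of_subset hJsub
        (M.closure_subset_ground _)
      have hIb : M.IsBasis (insert a I₀) (M.closure (insert a I₀)) := hI₁.isBasis_closure
      have he : J₁.encard = (insert a I₀).encard := hJ₁.encard_eq_encard hIb
      have hJ₁fin : J₁.Finite := by
        rw [← Set.encard_lt_top_iff]
        rw [he, Set.encard_lt_top_iff]
        exact Set.toFinite _
      have hJ₁card : J₁.ncard = I₀.ncard + 1 := by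
        have h1 : (insert a I₀).ncard = I₀.ncard + 1 :=
          Set.ncard_insert_of_notMem haI₀ (Set.toFinite _)
        rw [← hJ₁fin.cast_ncard_eq, ← (Set.toFinite _).cast_ncard_eq] at he
        have h2 : J₁.ncard = (insert a I₀).ncard := by exact_mod_cast he
        omega
      have hnJ : none ∈ J := by
        by_contra hnJ
        have h1 := ncard_eq_of_none_not_mem hnJ
        rw [← hJ₀def] at h1
        have h2 : J₀.ncard ≤ J₁.ncard := Set.ncard_le_ncard hJJ₁ hJ₁fin
        omega
      have hJ₀J₁ : J₀ = J₁ := by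
        refine Set.eq_of_subset_of_ncard_le hJJ₁ ?_ hJ₁fin
        have := ncard_eq_of_none_mem hnJ
        rw [← hJ₀def] at this
        omega
      have hclJ : M.closure J₀ = M.closure (insert a I₀) := by
        rw [hJ₀J₁, hJ₁.closure_eq_closure, Matroid.closure_closure]
      obtain ⟨b, hbA, hb⟩ := not_subset.1 (hJ.2 hnJ)
      rw [hclJ] at hb
      obtain ⟨c, hc, hcind⟩ := indep_augment_ncard hI.1 hJ.1 hJcard
        (Set.toFinite _) (Set.toFinite _)
      have hsub : (insert c I₀ : Set C) ⊆ M.closure (insert a I₀) := by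
        refine insert_subset (hJsub hc.1) ?_
        exact (subset_insert a I₀).trans
          (M.subset_closure _ (by rw [hE]; exact subset_univ _))
      have hbc : b ∉ M.closure (insert c I₀) := fun h =>
        hb (M.closure_subset_closure_of_subset_closure hsub h)
      exact hsome_step c hc.1 hc.2 hcind (fun _ hsubA => hbc (hsubA hbA))
    · obtain ⟨c, hcJ₀, hc⟩ := not_subset.1 hJsub
      have hcnot : c ∉ insert a I₀ := fun h =>
        hc (M.subset_closure _ (by rw [hE]; exact subset_univ _) h)
      have hcind : M.Indep (insert c (insert a I₀)) := by
        rw [hI₁.insert_indep_iff_of_notMem hcnot]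
        exact ⟨by rw [hE]; trivial, hc⟩
      have hca : c ≠ a := fun h => hcnot (h ▸ mem_insert _ _)
      have hcI₀ : c ∉ I₀ := fun h => hcnot (mem_insert_of_mem _ h)
      have hind' : M.Indep (insert c I₀) :=
        hcind.subset (insert_subset_insert (subset_insert a I₀))
      have hna : a ∉ M.closure (insert c I₀) := by
        have hins : M.Indep (insert a (insert c I₀)) := by
          rw [insert_comm]; exact hcind
        have haniI : a ∉ insert c I₀ := by
          simp only [mem_insert_iff]
          push_neg
          exact ⟨fun h => hca h.symm, haI₀⟩
        exact (hind'.notMem_closure_iff_of_notMem haniI (by rw [hE]; trivial)).2 hins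
      exact hsome_step c hcJ₀ hcI₀ hind' (fun _ hsubA => hna (hsubA haA))
  · -- Case A
    have hcI : I.ncard = I₀.ncard := by
      have := ncard_eq_of_none_not_mem hnI
      rwa [← hI₀def] at this
    by_cases h1 : I₀.ncard < J₀.ncard
    · obtain ⟨c, hc, hcind⟩ := indep_augment_ncard hI.1 hJ.1 h1 (Set.toFinite _) (Set.toFinite _)
      exact hsome_step c hc.1 hc.2 hcind (fun h => absurd h hnI)
    · have hnJ : none ∈ J := by
        by_contra hnJ
        have := ncard_eq_of_none_not_mem hnJ
        rw [← hJ₀def] at this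
        omega
      have hJc : J.ncard = J₀.ncard + 1 := by
        have := ncard_eq_of_none_mem hnJ
        rwa [← hJ₀def] at this
      have heqc : I₀.ncard = J₀.ncard := by omega
      have hAJ := hJ.2 hnJ
      by_cases hAI : A ⊆ M.closure I₀
      · by_cases hJsub : J₀ ⊆ M.closure I₀
        · exfalso
          have hclJ : M.closure J₀ = M.closure I₀ :=
            closure_eq_of_subset_closure hI.1 hJ.1 hJsub (by omega) (Set.toFinite _)
          exact hAJ (hclJ ▸ hAI)
        · obtain ⟨c, hcJ₀, hc⟩ := not_subset.1 hJsub
          have hcI₀ : c ∉ I₀ := fun h =>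
            hc (M.subset_closure _ (by rw [hE]; exact subset_univ _) h)
          have hcind : M.Indep (insert c I₀) := by
            rw [hI.1.insert_indep_iff_of_notMem hcI₀]
            exact ⟨by rw [hE]; trivial, hc⟩
          exact hsome_step c hcJ₀ hcI₀ hcind (fun h => absurd h hnI)
      · refine ⟨none, hnJ, hnI, ?_, ?_⟩
        · rw [preimage_some_insert_none]; exact hI.1
        · intro _
          rw [preimage_some_insert_none]
          exact hAI
  end Ext

section ExtM
variable {C : Type*}

/-- The principal extension matroid. -/
noncomputable def ExtM [Fintype C] (M : Matroid C) (A : Set C) (hE : M.E = Set.univ) :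
    Matroid (Option C) :=
  (IndepMatroid.ofFinite Set.finite_univ (ExtIndep M A)
    ⟨by simpa using M.empty_indep, by simp⟩
    (fun I J hJ hIJ =>
      ⟨hJ.1.subset (preimage_mono hIJ), fun hn hA =>
        hJ.2 (hIJ hn) (hA.trans (M.closure_subset_closure (preimage_mono hIJ)))⟩)
    (fun I J hI hJ hc => extIndep_aug hE hI hJ hc)
    (fun I _ => subset_univ I)).matroid

@[simp] lemma ExtM_E [Fintype C] (M : Matroid C) (A : Set C) (hE : M.E = Set.univ) :
    (ExtM M A hE).E = Set.univ := by
  rfl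

@[simp] lemma ExtM_indep [Fintype C] (M : Matroid C) (A : Set C) (hE : M.E = Set.univ)
    {I : Set (Option C)} : (ExtM M A hE).Indep I ↔ ExtIndep M A I := by
  exact Iff.rfl

lemma flat_of_closure_subset' {γ : Type*} {M : Matroid γ} {F : Set γ}
    (hF : F ⊆ M.E) (h : M.closure F ⊆ F) : M.IsFlat F := by
  refine ⟨fun I X hIF hIX => ?_, hF⟩
  have h1 : X ⊆ M.closure I := hIX.subset_closure
  rw [hIF.closure_eq_closure] at h1
  exact h1.trans h

lemma ExtM_flat [Fintype C] {M : Matroid C} {A : Set C} (hE : M.E = Set.univ)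
    {Z : Set C} (hZ : M.IsFlat Z) {F' : Set (Option C)}
    (hsomeMem : ∀ c, some c ∈ F' ↔ c ∈ Z)
    (hnoneMem : none ∈ F' ↔ A ⊆ Z) : (ExtM M A hE).IsFlat F' := by
  apply flat_of_closure_subset' (by simp)
  obtain ⟨I, hI⟩ := (ExtM M A hE).exists_isBasis F' (by simp)
  rw [← hI.closure_eq_closure]
  intro e he
  by_contra heF
  have heI : e ∉ I := fun h => heF (hI.subset h)
  have hIi : ExtIndep M A I := (ExtM_indep M A hE).1 hI.indep
  have hI₀Z : (some ⁻¹' I : Set C) ⊆ Z := fun c hc => (hsomeMem c).1 (hI.subset hc)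
  have hclZ : M.closure (some ⁻¹' I) ⊆ Z := by
    have h1 : M.closure (some ⁻¹' I) ⊆ M.closure Z := M.closure_subset_closure hI₀Z
    rwa [hZ.closure] at h1
  have hind : (ExtM M A hE).Indep (insert e I) := by
    rw [ExtM_indep]
    cases e with
    | none =>
      have hA : ¬ A ⊆ Z := fun h => heF (hnoneMem.2 h)
      obtain ⟨a, haA, haZ⟩ := not_subset.1 hA
      refine ⟨by rw [preimage_some_insert_none]; exact hIi.1, fun _ => ?_⟩
      rw [preimage_some_insert_none]
      exact fun hsub => haZ (hclZ (hsub haA))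
    | some c =>
      have hc : c ∉ Z := fun h => heF ((hsomeMem c).2 h)
      have hcI₀ : c ∉ (some ⁻¹' I : Set C) := fun h => hc (hI₀Z h)
      have hccl : c ∉ M.closure (some ⁻¹' I) := fun h => hc (hclZ h)
      constructor
      · rw [preimage_some_insert_some, hIi.1.insert_indep_iff_of_notMem hcI₀]
        exact ⟨by rw [hE]; trivial, hccl⟩
      · intro hn
        have hnI : none ∈ I := by simpa using hn
        have hAZ : A ⊆ Z := hnoneMem.1 (hI.subset hnI)
        rw [preimage_some_insert_some]
        intro hsub
        obtain ⟨a, haA, hacl⟩ := not_subset.1 (hIi.2 hnI)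
        have hc2 : c ∈ M.closure (insert a (some ⁻¹' I)) :=
          Matroid.mem_closure_insert hacl (hsub haA)
        have hsubZ : insert a (some ⁻¹' I : Set C) ⊆ Z := insert_subset (hAZ haA) hI₀Z
        have : M.closure (insert a (some ⁻¹' I)) ⊆ Z := by
          have h1 := M.closure_subset_closure hsubZ
          rwa [hZ.closure] at h1
        exact hc (this hc2)
  exact (hI.indep.notMem_closure_iff_of_notMem heI (by simp)).2 hind he

lemma ExtM_base [Fintype C] {M : Matroid C} {A : Set C} (hE : M.E = Set.univ)
    {B : Set C} (hB : M.IsBase B) : (ExtM M A hE).IsBase (some '' B) := by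
  have hpre : (some ⁻¹' (some '' B) : Set C) = B :=
    Set.preimage_image_eq _ (Option.some_injective C)
  have hind : (ExtM M A hE).Indep (some '' B) := by
    rw [ExtM_indep]
    exact ⟨by rw [hpre]; exact hB.indep, fun hn => absurd hn (by simp)⟩
  refine hind.isBase_of_maximal fun J hJ hBJ => ?_
  rw [ExtM_indep] at hJ
  have hBJ₀ : B ⊆ some ⁻¹' J := by rw [← hpre]; exact preimage_mono hBJ
  have hBeq : B = some ⁻¹' J := hB.eq_of_subset_indep hJ.1 hBJ₀
  have hnJ : none ∉ J := fun hn =>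
    hJ.2 hn (by rw [← hBeq, hB.closure_eq, hE]; exact subset_univ _)
  rw [hBeq]
  exact image_some_preimage hnJ

end ExtM


section MoreAux

lemma mrk_eq_ncard_of_base {γ : Type*} {M : Matroid γ} {B : Set γ} (hB : M.IsBase B) :
    M.mrk = B.ncard := by
  have h : Set.ncard '' {B' | M.IsBase B'} = {B.ncard} := by
    apply Set.eq_singleton_iff_unique_mem.2
    refine ⟨⟨B, hB, rfl⟩, ?_⟩
    rintro _ ⟨B', hB', rfl⟩
    exact hB'.ncard_eq_ncard_of_isBase hB
  rw [Matroid.mrk, h, csSup_singleton]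

lemma freeOn_univ_flat {γ : Type*} (F : Set γ) : (Matroid.freeOn (univ : Set γ)).IsFlat F := by
  apply flat_of_closure_subset' (by simp)
  intro e he
  have hind : (Matroid.freeOn (univ : Set γ)).Indep F := by
    rw [Matroid.freeOn_indep_iff]; exact subset_univ _
  rcases hind.mem_closure_iff.1 he with h | h
  · exact absurd (by rw [Matroid.freeOn_indep_iff]; exact subset_univ _) h.not_indep
  · exact h

lemma freeOn_mem_RX {R C : Type*} (X : R → C → Bool) :
    Matroid.freeOn (Set.univ : Set C) ∈ RX X :=
  ⟨by simp, fun _ => freeOn_univ_flat _⟩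

end MoreAux

/-- appending a column whose zero set is the intersection of the
zero sets of some set of columns does not change the matroid minimum rank. -/
theorem mr_append_column [Fintype R] [Fintype C] (X : R → C → Bool)
    (X' : R → Option C → Bool) (A : Set C)
    (hsome : ∀ r c, X' r (some c) = X r c)
    (hnone : ∀ r, X' r none = false ↔ r ∈ ZCol X A) :
    mr X' = mr X := by
  classical
  have hcomap_mem : ∀ M' : Matroid (Option C), M' ∈ RX X' → (M'.comap some) ∈ RX X := by
    intro M' hM'
    have hEc : (M'.comap some).E = univ := by
      rw [Matroid.comap_ground_eq, hM'.1]; ext x; simp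
    refine ⟨hEc, fun r => ?_⟩
    have hZsub : ∀ c, c ∈ ZRow X {r} ↔ some c ∈ ZRow X' {r} := by
      intro c; simp [ZRow, hsome]
    apply flat_of_closure_subset' (by rw [hEc]; exact subset_univ _)
    obtain ⟨I, hI⟩ := (M'.comap some).exists_isBasis (ZRow X {r}) (by rw [hEc]; exact subset_univ _)
    rw [← hI.closure_eq_closure]
    intro e he
    by_contra heZ
    have heI : e ∉ I := fun h => heZ (hI.subset h)
    have hIi : M'.Indep (some '' I) := (Matroid.comap_indep_iff.1 hI.indep).1
    have hIF : some '' I ⊆ ZRow X' {r} := by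
      rintro _ ⟨c, hc, rfl⟩
      exact (hZsub c).1 (hI.subset hc)
    have hF := hM'.2 r
    have hecl : some e ∉ M'.closure (some '' I) := by
      intro h
      have h2 : M'.closure (some '' I) ⊆ ZRow X' {r} := by
        have h3 := M'.closure_subset_closure hIF
        rwa [hF.closure] at h3
      exact heZ ((hZsub e).2 (h2 h))
    have heim : some e ∉ some '' I := fun h =>
      heI (((Option.some_injective C).mem_set_image).1 h)
    have hind : (M'.comap some).Indep (insert e I) := by
      rw [Matroid.comap_indep_iff]
      refine ⟨?_, (Option.some_injective C).injOn⟩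
      rw [image_insert_eq, hIi.insert_indep_iff_of_notMem heim]
      exact ⟨by rw [hM'.1]; trivial, hecl⟩
    exact (hI.indep.notMem_closure_iff_of_notMem heI (by rw [hEc]; trivial)).2 hind he
  have hcomap_rk : ∀ M' : Matroid (Option C), (M'.comap some).mrk ≤ M'.mrk := by
    intro M'
    obtain ⟨B, hB⟩ := (M'.comap some).exists_isBase
    obtain ⟨B', hB', hsub⟩ := (Matroid.comap_indep_iff.1 hB.indep).1.exists_isBase_superset
    rw [mrk_eq_ncard_of_base hB, mrk_eq_ncard_of_base hB']
    calc B.ncard = (some '' B).ncard :=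
          (Set.ncard_image_of_injective _ (Option.some_injective C)).symm
      _ ≤ B'.ncard := Set.ncard_le_ncard hsub (Set.toFinite _)
  have hne : (Matroid.mrk '' RX X).Nonempty := ⟨_, ⟨_, freeOn_mem_RX X, rfl⟩⟩
  have hne' : (Matroid.mrk '' RX X').Nonempty := ⟨_, ⟨_, freeOn_mem_RX X', rfl⟩⟩
  unfold mr
  apply le_antisymm
  · obtain ⟨M, hM, hMr⟩ := Nat.sInf_mem hne
    have hE := hM.1
    have hmem : ExtM M A hE ∈ RX X' := by
      refine ⟨by simp, fun r => ?_⟩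
      apply ExtM_flat hE (hM.2 r)
      · intro c; simp [ZRow, hsome]
      · show none ∈ ZRow X' {r} ↔ _
        simp only [ZRow, mem_setOf_eq, mem_singleton_iff, forall_eq]
        rw [hnone r]
        simp [ZCol, ZRow, Set.subset_def]
    have hrk : (ExtM M A hE).mrk = M.mrk := by
      obtain ⟨B, hB⟩ := M.exists_isBase
      rw [mrk_eq_ncard_of_base (ExtM_base hE hB), mrk_eq_ncard_of_base hB,
        Set.ncard_image_of_injective _ (Option.some_injective C)]
    calc sInf (Matroid.mrk '' RX X') ≤ (ExtM M A hE).mrk := Nat.sInf_le ⟨_, hmem, rfl⟩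
      _ = sInf (Matroid.mrk '' RX X) := by rw [hrk]; exact hMr
  · obtain ⟨M', hM', hMr'⟩ := Nat.sInf_mem hne'
    calc sInf (Matroid.mrk '' RX X) ≤ (M'.comap some).mrk :=
          Nat.sInf_le ⟨_, hcomap_mem M' hM', rfl⟩
      _ ≤ M'.mrk := hcomap_rk M'
      _ = sInf (Matroid.mrk '' RX X') := hMr'
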